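/- arXiv:1404.7119 — 12 statements merged into one kernel-verified Lean document; each statement's English description precedes it below -/
import Mathlib

section
/- The function H1(x,y,z) = y·z is a constant of motion of the Lotka–Volterra type system ẋ = x(by+cz), ẏ = y(ax−by+cz), ż = z(−ax+by−cz): for every differentiable curve γ : ℝ → ℝ³, γ = (x,y,z), satisfying x'(t) = x(t)(b·y(t)+c·z(t)), y'(t) = y(t)(a·x(t)−b·y(t)+c·z(t)), z'(t) = z(t)(−a·x(t)+b·y(t)−c·z(t)) for all t, the function t ↦ y(t)·z(t) is constant. -/
/-- `H₁(x,y,z) = y·z` is a constant of motion of the Lotka–Volterra type system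
`ẋ = x(by+cz)`, `ẏ = y(ax−by+cz)`, `ż = z(−ax+by−cz)`. -/
theorem H1_constant_of_motion (a b c : ℝ) (ha : a ≠ 0) (hc : c ≠ 0)
    (x y z : ℝ → ℝ)
    (hx : ∀ t, HasDerivAt x (x t * (b * y t + c * z t)) t)
    (hy : ∀ t, HasDerivAt y (y t * (a * x t - b * y t + c * z t)) t)
    (hz : ∀ t, HasDerivAt z (z t * (-(a * x t) + b * y t - c * z t)) t) :
    ∀ s t : ℝ, y s * z s = y t * z t := by
  have key : ∀ u, HasDerivAt (fun t => y t * z t) 0 u := by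
    intro u
    have h : HasDerivAt (fun t => y t * z t)
        (y u * (a * x u - b * y u + c * z u) * z u + y u * (z u * (-(a * x u) + b * y u - c * z u))) u :=
      (hy u).mul (hz u)
    convert h using 1
    ring
  intro s t
  have := is_const_of_deriv_eq_zero (f := fun t => y t * z t)
    (fun u => (key u).differentiableAt) (fun u => (key u).deriv) s t
  exact this
end

section
/- The function H2(x,y,z) = x(ax−2by+2cz) is a constant of motion of the Lotka–Volterra type system ẋ = x(by+cz), ẏ = y(ax−by+cz), ż = z(−ax+by−cz): for every differentiable curve γ : ℝ → ℝ³, γ = (x,y,z), satisfying the system for all t, the function t ↦ x(t)(a·x(t)−2b·y(t)+2c·z(t)) is constant. -/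
/-- `H₂(x,y,z) = x(ax−2by+2cz)` is a constant of motion of the Lotka–Volterra type system
`ẋ = x(by+cz)`, `ẏ = y(ax−by+cz)`, `ż = z(−ax+by−cz)`. -/
theorem H2_constant_of_motion (a b c : ℝ) (ha : a ≠ 0) (hc : c ≠ 0)
    (x y z : ℝ → ℝ)
    (hx : ∀ t, HasDerivAt x (x t * (b * y t + c * z t)) t)
    (hy : ∀ t, HasDerivAt y (y t * (a * x t - b * y t + c * z t)) t)
    (hz : ∀ t, HasDerivAt z (z t * (-(a * x t) + b * y t - c * z t)) t) :
    ∀ s t : ℝ, x s * (a * x s - 2 * b * y s + 2 * c * z s)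
             = x t * (a * x t - 2 * b * y t + 2 * c * z t) := by
  have key : ∀ t, HasDerivAt (fun t => x t * (a * x t - 2 * b * y t + 2 * c * z t)) 0 t := by
    intro t
    have h : HasDerivAt (fun t => x t * (a * x t - 2 * b * y t + 2 * c * z t))
        (x t * (b * y t + c * z t) * (a * x t - 2 * b * y t + 2 * c * z t) +
          x t * (a * (x t * (b * y t + c * z t)) - 2 * b * (y t * (a * x t - b * y t + c * z t)) +
            2 * c * (z t * (-(a * x t) + b * y t - c * z t)))) t := ((hx t).mul ((((hx t).const_mul a).sub ((hy t).const_mul (2*b))).add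
      ((hz t).const_mul (2*c))))
    convert h using 1
    ring
  intro s t
  have : ∀ u v : ℝ, u ≤ v → x u * (a * x u - 2 * b * y u + 2 * c * z u)
      = x v * (a * x v - 2 * b * y v + 2 * c * z v) := by
    intro u v huv
    have := constant_of_has_deriv_right_zero (f := fun t => x t * (a * x t - 2 * b * y t + 2 * c * z t))
      (a := u) (b := v)
      (fun t _ => (key t).continuousAt.continuousWithinAt)
      (fun t _ => (key t).hasDerivWithinAt) v (by simp [huv])
    simpa using this.symm
  rcases le_total s t with h | h
  · exact this s t h
  · exact (this t s h).symm
end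

section
/- The Lotka–Volterra type system is Hamiltonian with respect to the Poisson matrix π1: for all (x,y,z) ∈ ℝ³, the matrix–vector product π1(x,y,z) · ∇H2(x,y,z) equals the vector field (x(by+cz), y(ax−by+cz), z(−ax+by−cz)), where H2(x,y,z) = x(ax−2by+2cz) and ∇H2(x,y,z) = (2ax−2by+2cz, −2bx, 2cx). -/
/-- The Lotka–Volterra type system is Hamiltonian with respect to the Poisson matrix `π₁`:
`π₁(x,y,z) · ∇H₂(x,y,z)` is the vector field of the system, where `H₂ = x(ax−2by+2cz)`. -/
theorem pi1_gradH2_eq_vector_field (a b c : ℝ) (ha : a ≠ 0) (hc : c ≠ 0) (x y z : ℝ) :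
    (!![0, -y / 2, z / 2;
        y / 2, 0, 0;
        -z / 2, 0, 0] : Matrix (Fin 3) (Fin 3) ℝ).mulVec
      ![2 * a * x - 2 * b * y + 2 * c * z, -(2 * b * x), 2 * c * x]
    = ![x * (b * y + c * z),
        y * (a * x - b * y + c * z),
        z * (-(a * x) + b * y - c * z)] := by
  funext i
  fin_cases i <;>
    simp [Matrix.mulVec, dotProduct, Fin.sum_univ_succ] <;> ring
end

section
/- (Proposition: conformal symmetry) Let X be the vector field on ℝ³ with components X(x,y,z) = (x, y, z) (the spatial part of X = −t∂/∂t + x∂/∂x + y∂/∂y + z∂/∂z). Then the Lie derivatives satisfy L_X π1 = −π1, L_X π2 = −π2, L_X H1 = 2H1 and L_X H2 = 2H2, where for a matrix-valued field π the Lie derivative is given componentwise by (L_X π)^{ij}(p) = Σ_k [X^k(p) ∂_k π^{ij}(p) − π^{kj}(p) ∂_k X^i(p) − π^{ik}(p) ∂_k X^j(p)], and for a function H, L_X H(p) = Σ_k X^k(p) ∂_k H(p). -/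
/-- Componentwise Lie derivative of a matrix-valued field `π` along a vector field `X`:
`(L_X π)^{ij}(p) = Σ_k [X^k(p) ∂_k π^{ij}(p) − π^{kj}(p) ∂_k X^i(p) − π^{ik}(p) ∂_k X^j(p)]`. -/
noncomputable def matLieDeriv (X : (Fin 3 → ℝ) → (Fin 3 → ℝ))
    (π : (Fin 3 → ℝ) → Matrix (Fin 3) (Fin 3) ℝ) (p : Fin 3 → ℝ) :
    Matrix (Fin 3) (Fin 3) ℝ :=
  Matrix.of fun i j => ∑ k,
    (X p k * fderiv ℝ (fun q => π q i j) p (Pi.single k 1)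
      - π p k j * fderiv ℝ (fun q => X q i) p (Pi.single k 1)
      - π p i k * fderiv ℝ (fun q => X q j) p (Pi.single k 1))

/-- Lie derivative of a function `H` along a vector field `X`:
`(L_X H)(p) = Σ_k X^k(p) ∂_k H(p)`. -/
noncomputable def funLieDeriv (X : (Fin 3 → ℝ) → (Fin 3 → ℝ))
    (H : (Fin 3 → ℝ) → ℝ) (p : Fin 3 → ℝ) : ℝ :=
  ∑ k, X p k * fderiv ℝ H p (Pi.single k 1)

lemma hasfd_lin (α β γ : ℝ) (p : Fin 3 → ℝ) :
    HasFDerivAt (fun q : Fin 3 → ℝ => α * q 0 + β * q 1 + γ * q 2)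
      (α • (ContinuousLinearMap.proj 0 : (Fin 3 → ℝ) →L[ℝ] ℝ)
        + β • (ContinuousLinearMap.proj 1 : (Fin 3 → ℝ) →L[ℝ] ℝ)
        + γ • (ContinuousLinearMap.proj 2 : (Fin 3 → ℝ) →L[ℝ] ℝ)) p :=
  (((ContinuousLinearMap.proj 0 : (Fin 3 → ℝ) →L[ℝ] ℝ).hasFDerivAt.const_mul α).add
    ((ContinuousLinearMap.proj 1 : (Fin 3 → ℝ) →L[ℝ] ℝ).hasFDerivAt.const_mul β)).add
    ((ContinuousLinearMap.proj 2 : (Fin 3 → ℝ) →L[ℝ] ℝ).hasFDerivAt.const_mul γ)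

lemma fd_lin (α β γ : ℝ) (f : (Fin 3 → ℝ) → ℝ)
    (hf : ∀ q, f q = α * q 0 + β * q 1 + γ * q 2) (p v : Fin 3 → ℝ) :
    fderiv ℝ f p v = α * v 0 + β * v 1 + γ * v 2 := by
  rw [show f = fun q => α * q 0 + β * q 1 + γ * q 2 from funext hf,
    (hasfd_lin α β γ p).fderiv]
  simp

lemma fin3_mk_two (h : 2 < 3) : (⟨2, h⟩ : Fin 3) = 2 := rfl

lemma fd_proj (i : Fin 3) (p v : Fin 3 → ℝ) :
    fderiv ℝ (fun q : Fin 3 → ℝ => q i) p v = v i := by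
  have h : HasFDerivAt (fun q : Fin 3 → ℝ => q i)
      (ContinuousLinearMap.proj i : (Fin 3 → ℝ) →L[ℝ] ℝ) p :=
    (ContinuousLinearMap.proj i : (Fin 3 → ℝ) →L[ℝ] ℝ).hasFDerivAt
  rw [h.fderiv]; rfl

lemma fdA (p v : Fin 3 → ℝ) : fderiv ℝ (fun q : Fin 3 → ℝ => -(q 1) / 2) p v = -(v 1) / 2 :=
  (fd_lin 0 (-(1/2)) 0 _ (fun q => by ring) p v).trans (by ring)

lemma fdB (p v : Fin 3 → ℝ) : fderiv ℝ (fun q : Fin 3 → ℝ => q 2 / 2) p v = v 2 / 2 :=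
  (fd_lin 0 0 (1/2) _ (fun q => by ring) p v).trans (by ring)

lemma fdC (p v : Fin 3 → ℝ) : fderiv ℝ (fun q : Fin 3 → ℝ => q 1 / 2) p v = v 1 / 2 :=
  (fd_lin 0 (1/2) 0 _ (fun q => by ring) p v).trans (by ring)

lemma fdD (p v : Fin 3 → ℝ) : fderiv ℝ (fun q : Fin 3 → ℝ => -(q 2) / 2) p v = -(v 2) / 2 :=
  (fd_lin 0 0 (-(1/2)) _ (fun q => by ring) p v).trans (by ring)

lemma fdE (c : ℝ) (p v : Fin 3 → ℝ) :
    fderiv ℝ (fun q : Fin 3 → ℝ => c * q 0) p v = c * v 0 :=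
  (fd_lin c 0 0 _ (fun q => by ring) p v).trans (by ring)

lemma fdF (c : ℝ) (p v : Fin 3 → ℝ) :
    fderiv ℝ (fun q : Fin 3 → ℝ => -(c * q 0)) p v = -(c * v 0) :=
  (fd_lin (-c) 0 0 _ (fun q => by ring) p v).trans (by ring)

lemma fdG (a b c : ℝ) (p v : Fin 3 → ℝ) :
    fderiv ℝ (fun q : Fin 3 → ℝ => a * q 0 - b * q 1 + c * q 2) p v
      = a * v 0 - b * v 1 + c * v 2 :=
  (fd_lin a (-b) c _ (fun q => by ring) p v).trans (by ring)

lemma fdH (a b c : ℝ) (p v : Fin 3 → ℝ) :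
    fderiv ℝ (fun q : Fin 3 → ℝ => -(a * q 0 - b * q 1 + c * q 2)) p v
      = -(a * v 0 - b * v 1 + c * v 2) :=
  (fd_lin (-a) b (-c) _ (fun q => by ring) p v).trans (by ring)

lemma fd_H1 (p v : Fin 3 → ℝ) :
    fderiv ℝ (fun q : Fin 3 → ℝ => q 1 * q 2) p v = p 1 * v 2 + p 2 * v 1 := by
  have h : HasFDerivAt (fun q : Fin 3 → ℝ => q 1 * q 2)
      ((ContinuousLinearMap.proj 1 : (Fin 3 → ℝ) →L[ℝ] ℝ) p • (ContinuousLinearMap.proj 2 : (Fin 3 → ℝ) →L[ℝ] ℝ)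
        + (ContinuousLinearMap.proj 2 : (Fin 3 → ℝ) →L[ℝ] ℝ) p • (ContinuousLinearMap.proj 1 : (Fin 3 → ℝ) →L[ℝ] ℝ)) p :=
    ((ContinuousLinearMap.proj 1 : (Fin 3 → ℝ) →L[ℝ] ℝ).hasFDerivAt (x := p)).mul
      ((ContinuousLinearMap.proj 2 : (Fin 3 → ℝ) →L[ℝ] ℝ).hasFDerivAt (x := p))
  rw [h.fderiv]
  simp

lemma fd_H2 (a b c : ℝ) (p v : Fin 3 → ℝ) :
    fderiv ℝ (fun q : Fin 3 → ℝ => q 0 * (a * q 0 - 2 * b * q 1 + 2 * c * q 2)) p v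
      = p 0 * (a * v 0 - 2 * b * v 1 + 2 * c * v 2)
        + (a * p 0 - 2 * b * p 1 + 2 * c * p 2) * v 0 := by
  have h : HasFDerivAt (fun q : Fin 3 → ℝ => q 0 * (a * q 0 + -(2*b) * q 1 + 2*c * q 2))
      ((ContinuousLinearMap.proj 0 : (Fin 3 → ℝ) →L[ℝ] ℝ) p •
          (a • (ContinuousLinearMap.proj 0 : (Fin 3 → ℝ) →L[ℝ] ℝ)
            + -(2*b) • (ContinuousLinearMap.proj 1 : (Fin 3 → ℝ) →L[ℝ] ℝ)
            + (2*c) • (ContinuousLinearMap.proj 2 : (Fin 3 → ℝ) →L[ℝ] ℝ))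
        + (a * p 0 + -(2*b) * p 1 + 2*c * p 2) • (ContinuousLinearMap.proj 0 : (Fin 3 → ℝ) →L[ℝ] ℝ)) p :=
    ((ContinuousLinearMap.proj 0 : (Fin 3 → ℝ) →L[ℝ] ℝ).hasFDerivAt (x := p)).mul
      (hasfd_lin a (-(2*b)) (2*c) p)
  rw [show (fun q : Fin 3 → ℝ => q 0 * (a * q 0 - 2 * b * q 1 + 2 * c * q 2))
      = fun q : Fin 3 → ℝ => q 0 * (a * q 0 + -(2*b) * q 1 + 2*c * q 2) from
      funext fun q => by ring, h.fderiv]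
  simp [ContinuousLinearMap.proj_apply]
  ring

/-- Proposition (conformal symmetry): for the vector field `X(x,y,z) = (x,y,z)` one has
`L_X π₁ = −π₁`, `L_X π₂ = −π₂`, `L_X H₁ = 2H₁`, `L_X H₂ = 2H₂`. -/
theorem X_conformal_symmetry (a b c : ℝ) (ha : a ≠ 0) (hc : c ≠ 0)
    (X : (Fin 3 → ℝ) → (Fin 3 → ℝ)) (hX : ∀ p, X p = p)
    (π₁ π₂ : (Fin 3 → ℝ) → Matrix (Fin 3) (Fin 3) ℝ)
    (hπ₁ : ∀ p, π₁ p = !![0, -(p 1) / 2, p 2 / 2;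
                          p 1 / 2, 0, 0;
                          -(p 2) / 2, 0, 0])
    (hπ₂ : ∀ p, π₂ p = !![0, c * p 0, b * p 0;
                          -(c * p 0), 0, a * p 0 - b * p 1 + c * p 2;
                          -(b * p 0), -(a * p 0 - b * p 1 + c * p 2), 0])
    (H₁ H₂ : (Fin 3 → ℝ) → ℝ)
    (hH₁ : ∀ p, H₁ p = p 1 * p 2)
    (hH₂ : ∀ p, H₂ p = p 0 * (a * p 0 - 2 * b * p 1 + 2 * c * p 2)) :
    (∀ p, matLieDeriv X π₁ p = -(π₁ p))
    ∧ (∀ p, matLieDeriv X π₂ p = -(π₂ p))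
    ∧ (∀ p, funLieDeriv X H₁ p = 2 * H₁ p)
    ∧ (∀ p, funLieDeriv X H₂ p = 2 * H₂ p) := by
  have hXe : X = fun p => p := funext hX
  have hπ₁e : π₁ = fun p => !![0, -(p 1) / 2, p 2 / 2;
                          p 1 / 2, 0, 0;
                          -(p 2) / 2, 0, 0] := funext hπ₁
  have hπ₂e : π₂ = fun p => !![0, c * p 0, b * p 0;
                          -(c * p 0), 0, a * p 0 - b * p 1 + c * p 2;
                          -(b * p 0), -(a * p 0 - b * p 1 + c * p 2), 0] := funext hπ₂
  have hH₁e : H₁ = fun p => p 1 * p 2 := funext hH₁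
  have hH₂e : H₂ = fun p => p 0 * (a * p 0 - 2 * b * p 1 + 2 * c * p 2) := funext hH₂
  subst hXe hπ₁e hπ₂e hH₁e hH₂e
  refine ⟨?_, ?_, ?_, ?_⟩
  · intro p
    ext i j
    fin_cases i <;> fin_cases j <;>
      (simp only [Fin.zero_eta, Fin.mk_one, fin3_mk_two];
       simp only [matLieDeriv, Matrix.of_apply, Fin.sum_univ_three, Fin.isValue,
        Matrix.cons_val', Matrix.cons_val_zero, Matrix.cons_val_one, Matrix.head_cons,
        Matrix.empty_val', Matrix.cons_val_fin_one, Matrix.head_fin_const,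
        Matrix.cons_val_two, Matrix.tail_cons,
        Matrix.neg_apply, fd_proj, fdA, fdB, fdC, fdD];
       try simp [Pi.single_apply];
       try ring)
  · intro p
    ext i j
    fin_cases i <;> fin_cases j <;>
      (simp only [Fin.zero_eta, Fin.mk_one, fin3_mk_two];
       simp only [matLieDeriv, Matrix.of_apply, Fin.sum_univ_three, Fin.isValue,
        Matrix.cons_val', Matrix.cons_val_zero, Matrix.cons_val_one, Matrix.head_cons,
        Matrix.empty_val', Matrix.cons_val_fin_one, Matrix.head_fin_const,
        Matrix.cons_val_two, Matrix.tail_cons,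
        Matrix.neg_apply, fd_proj, fdE, fdF, fdG, fdH];
       try simp [Pi.single_apply];
       try ring)
  · intro p
    simp [funLieDeriv, Fin.sum_univ_three, fd_H1, Pi.single_apply]
    ring
  · intro p
    simp [funLieDeriv, Fin.sum_univ_three, fd_H2, Pi.single_apply]
    ring
end

section
/- (Proposition: master symmetry) Let V : ℝ³ → ℝ³ be the vector field of the Lotka–Volterra type system, V(x,y,z) = (bxy+cxz, axy−by²+cyz, −axz+byz−cz²), and for k1 ∈ ℝ with k1 ≠ 0 and k2 ∈ ℝ let X(x,y,z) = (k1 x + k2 bxy + k2 cxz, k1 y + k2 axy − k2 by² + k2 cyz, k1 z − k2 axz + k2 byz − k2 cz²). Then the Lie bracket of vector fields satisfies [X, V] = k1 · V and [[X, V], V] = 0 (so X is a master symmetry wherever V does not vanish). -/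
/-- Lie bracket of vector fields on `ℝ³`:
`[X,Y](p) = (DY)(p)·X(p) − (DX)(p)·Y(p)`. -/
noncomputable def vfBracket (X Y : (Fin 3 → ℝ) → (Fin 3 → ℝ)) :
    (Fin 3 → ℝ) → (Fin 3 → ℝ) :=
  fun p => fderiv ℝ Y p (X p) - fderiv ℝ X p (Y p)

set_option maxHeartbeats 1000000 in
/-- Proposition (master symmetry): with `V` the Lotka–Volterra vector field and
`X = k₁·(x,y,z) + k₂·V`, one has `[X,V] = k₁·V` and `[[X,V],V] = 0`. -/
theorem X_master_symmetry (a b c k₁ k₂ : ℝ) (ha : a ≠ 0) (hc : c ≠ 0) (hk₁ : k₁ ≠ 0)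
    (V X : (Fin 3 → ℝ) → (Fin 3 → ℝ))
    (hV : ∀ p, V p = ![b * p 0 * p 1 + c * p 0 * p 2,
                       a * p 0 * p 1 - b * (p 1)^2 + c * p 1 * p 2,
                       -(a * p 0 * p 2) + b * p 1 * p 2 - c * (p 2)^2])
    (hX : ∀ p, X p = ![k₁ * p 0 + k₂ * b * p 0 * p 1 + k₂ * c * p 0 * p 2,
                       k₁ * p 1 + k₂ * a * p 0 * p 1 - k₂ * b * (p 1)^2 + k₂ * c * p 1 * p 2,
                       k₁ * p 2 - k₂ * a * p 0 * p 2 + k₂ * b * p 1 * p 2 - k₂ * c * (p 2)^2]) :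
    (∀ p, vfBracket X V p = k₁ • V p)
    ∧ (∀ p, vfBracket (vfBracket X V) V p = 0) := by
  -- differentiability of V
  have hdV : ∀ p, DifferentiableAt ℝ V p := by
    intro p
    have : V = fun p : Fin 3 → ℝ => (![b * p 0 * p 1 + c * p 0 * p 2,
                       a * p 0 * p 1 - b * (p 1)^2 + c * p 1 * p 2,
                       -(a * p 0 * p 2) + b * p 1 * p 2 - c * (p 2)^2] : Fin 3 → ℝ) := funext hV
    rw [this, differentiableAt_pi]
    intro i
    fin_cases i <;> simp <;> fun_prop
  -- homogeneity of degree 2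
  have hscale : ∀ (t : ℝ) (p : Fin 3 → ℝ), V (t • p) = (t^2) • V p := by
    intro t p
    funext i
    fin_cases i <;>
      simp [hV, Pi.smul_apply, smul_eq_mul] <;> ring
  -- Euler identity
  have hEuler : ∀ p, fderiv ℝ V p p = (2 : ℝ) • V p := by
    intro p
    have h1 : HasDerivAt (V ∘ fun t : ℝ => t • p) (fderiv ℝ V p p) 1 := by
      have hline : HasDerivAt (fun t : ℝ => t • p) p 1 := by
        simpa using (hasDerivAt_id (1:ℝ)).smul_const p
      exact HasFDerivAt.comp_hasDerivAt 1 (by simpa using (hdV p).hasFDerivAt) hline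
    have h2 : HasDerivAt (V ∘ fun t : ℝ => t • p) ((2:ℝ) • V p) 1 := by
      have : HasDerivAt (fun t : ℝ => (t^2) • V p) (((2:ℝ) * 1 ^ 1) • V p) 1 :=
        (hasDerivAt_pow 2 (1:ℝ)).smul_const (V p)
      simp only [pow_one, mul_one] at this
      have heq : (V ∘ fun t : ℝ => t • p) = fun t : ℝ => (t^2) • V p := by
        funext t; exact hscale t p
      rw [heq]
      simpa using this
    exact h1.unique h2
  -- X = k₁ • id + k₂ • V
  have hXeq : X = fun p => k₁ • p + k₂ • V p := by
    funext p i
    fin_cases i <;>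
      simp [hX, hV, Pi.smul_apply, smul_eq_mul] <;> ring
  have hdX : ∀ p, fderiv ℝ X p = k₁ • ContinuousLinearMap.id ℝ (Fin 3 → ℝ) + k₂ • fderiv ℝ V p := by
    intro p
    rw [hXeq]
    have d1 : DifferentiableAt ℝ (fun p : Fin 3 → ℝ => k₁ • p) p := by fun_prop
    have d2 : DifferentiableAt ℝ (fun p : Fin 3 → ℝ => k₂ • V p) p := (hdV p).const_smul k₂
    rw [fderiv_fun_add d1 d2, fderiv_fun_const_smul differentiableAt_fun_id k₁,
        fderiv_fun_const_smul (hdV p) k₂, fderiv_id']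
  have part1 : ∀ p, vfBracket X V p = k₁ • V p := by
    intro p
    simp only [vfBracket, hdX p]
    rw [congrFun hXeq p]
    simp only [ContinuousLinearMap.add_apply, ContinuousLinearMap.smul_apply,
      ContinuousLinearMap.id_apply, map_add, map_smul, hEuler p]
    module
  refine ⟨part1, ?_⟩
  intro p
  have hbr : vfBracket X V = fun p => k₁ • V p := funext part1
  have hdbr : fderiv ℝ (vfBracket X V) p = k₁ • fderiv ℝ V p := by
    rw [hbr, fderiv_fun_const_smul (hdV p) k₁]
  show fderiv ℝ V p (vfBracket X V p) - fderiv ℝ (vfBracket X V) p (V p) = 0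
  rw [part1 p, hdbr]
  simp
end

section
/- The map φ : ℝ⁴ → ℝ³ defined by φ(q1,q2,p1,p2) = (x,y,z) with x = p1/a + (b/a)p2·e^{(a/2)q1} − (c/a)e^{−(a/2)q1}, y = p2·e^{(a/2)q1}, z = e^{−(a/2)q1}, is a surjective submersion onto ℝ² × (0,∞) ⊆ ℝ³ (its image is { (x,y,z) : z > 0 }, it maps onto every point with z > 0, and its Fréchet derivative is surjective at every point of ℝ⁴). -/
open ContinuousLinearMap in
/-- The map `φ(q₁,q₂,p₁,p₂) = (p₁/a + (b/a)p₂e^{(a/2)q₁} − (c/a)e^{−(a/2)q₁},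
p₂e^{(a/2)q₁}, e^{−(a/2)q₁})` is a surjective submersion onto `{(x,y,z) : z > 0}`:
its image lies in `{z > 0}`, it attains every point with `z > 0`, and its Fréchet
derivative is surjective at every point of `ℝ⁴`. -/
theorem phi_surjective_submersion (a b c : ℝ) (ha : a ≠ 0) (hc : c ≠ 0)
    (φ : (Fin 4 → ℝ) → (Fin 3 → ℝ))
    (hφ : ∀ q, φ q = ![q 2 / a + b / a * q 3 * Real.exp (a / 2 * q 0)
                        - c / a * Real.exp (-(a / 2) * q 0),
                       q 3 * Real.exp (a / 2 * q 0),
                       Real.exp (-(a / 2) * q 0)]) :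
    (∀ q, φ q 2 > 0)
    ∧ (∀ v : Fin 3 → ℝ, v 2 > 0 → ∃ q, φ q = v)
    ∧ (∀ q, Function.Surjective (fderiv ℝ φ q)) := by
  have hφ' : φ = fun q => ![q 2 / a + b / a * q 3 * Real.exp (a / 2 * q 0)
                        - c / a * Real.exp (-(a / 2) * q 0),
                       q 3 * Real.exp (a / 2 * q 0),
                       Real.exp (-(a / 2) * q 0)] := funext hφ
  refine ⟨?_, ?_, ?_⟩
  · intro q
    rw [hφ]
    simp [Real.exp_pos]
  · intro v hv
    set L : ℝ := Real.log (v 2) with hLdef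
    set q0 : ℝ := -(2 / a) * L with hq0
    have h1 : a / 2 * q0 = -L := by rw [hq0]; field_simp
    have h2 : -(a / 2) * q0 = L := by rw [hq0]; field_simp
    have he1 : Real.exp (a / 2 * q0) = (v 2)⁻¹ := by
      rw [h1, Real.exp_neg, Real.exp_log hv]
    have he2 : Real.exp (-(a / 2) * q0) = v 2 := by
      rw [h2, Real.exp_log hv]
    refine ⟨![q0, 0, a * v 0 - b * v 1 + c * v 2, v 1 * v 2], ?_⟩
    rw [hφ]
    funext i
    fin_cases i <;>
      simp only [Matrix.cons_val_zero, Matrix.cons_val_one, Matrix.head_cons,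
        Matrix.cons_val_two, Matrix.cons_val_three, Matrix.tail_cons, Matrix.vecHead,
        Matrix.vecTail, Function.comp, he1, he2]
    · simp [Matrix.cons_val_succ]
      field_simp
      ring
    · simp [Matrix.cons_val_succ]
      field_simp
    · rfl
  · intro q
    set E := Real.exp (a / 2 * q 0) with hE
    set E' := Real.exp (-(a / 2) * q 0) with hE'
    have hEpos : (0:ℝ) < E := Real.exp_pos _
    have hE'pos : (0:ℝ) < E' := Real.exp_pos _
    set P0 : (Fin 4 → ℝ) →L[ℝ] ℝ := ContinuousLinearMap.proj 0 with hP0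
    set P2 : (Fin 4 → ℝ) →L[ℝ] ℝ := ContinuousLinearMap.proj 2 with hP2
    set P3 : (Fin 4 → ℝ) →L[ℝ] ℝ := ContinuousLinearMap.proj 3 with hP3
    set DE : (Fin 4 → ℝ) →L[ℝ] ℝ := E • ((a / 2) • P0) with hDE
    set DE' : (Fin 4 → ℝ) →L[ℝ] ℝ := E' • ((-(a / 2)) • P0) with hDE'
    set D1 : (Fin 4 → ℝ) →L[ℝ] ℝ := q 3 • DE + E • P3 with hD1
    set D0 : (Fin 4 → ℝ) →L[ℝ] ℝ := ((1 / a) • P2 + (b / a) • D1) - (c / a) • DE'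
      with hD0
    have hexp : HasFDerivAt (fun x : Fin 4 → ℝ => Real.exp (a / 2 * x 0)) DE q := by
      have := ((hasFDerivAt_apply (𝕜 := ℝ) 0 q).const_mul (a / 2)).exp
      simpa [hDE, hE, hP0] using this
    have hexp' : HasFDerivAt (fun x : Fin 4 → ℝ => Real.exp (-(a / 2) * x 0)) DE' q := by
      exact ((hasFDerivAt_apply (𝕜 := ℝ) 0 q).const_mul (-(a / 2))).exp
    have h1 : HasFDerivAt (fun x : Fin 4 → ℝ => x 3 * Real.exp (a / 2 * x 0)) D1 q := by
      have := (hasFDerivAt_apply (𝕜 := ℝ) 3 q).mul hexp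
      exact this
    have h0 : HasFDerivAt (fun x : Fin 4 → ℝ =>
        x 2 / a + b / a * x 3 * Real.exp (a / 2 * x 0)
          - c / a * Real.exp (-(a / 2) * x 0)) D0 q := by
      have key : (fun x : Fin 4 → ℝ =>
          x 2 / a + b / a * x 3 * Real.exp (a / 2 * x 0)
            - c / a * Real.exp (-(a / 2) * x 0))
          = fun x : Fin 4 → ℝ =>
            ((1 / a) * x 2 + (b / a) * (x 3 * Real.exp (a / 2 * x 0)))
              - (c / a) * Real.exp (-(a / 2) * x 0) := by
        funext x; ring
      rw [key]
      exact (((hasFDerivAt_apply (𝕜 := ℝ) 2 q).const_mul (1 / a)).add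
        (h1.const_mul (b / a))).sub (hexp'.const_mul (c / a))
    have hL : HasFDerivAt φ (ContinuousLinearMap.pi ![D0, D1, DE']) q := by
      rw [hφ']
      apply hasFDerivAt_pi''
      intro i
      fin_cases i <;>
        simp only [ContinuousLinearMap.proj_pi, Matrix.cons_val_zero, Matrix.cons_val_one,
          Matrix.head_cons, Matrix.cons_val_two, Matrix.tail_cons, Fin.isValue]
      · exact h0
      · exact h1
      · exact hexp'
    rw [hL.fderiv]
    intro w
    set v0 : ℝ := w 2 / (E' * (-(a / 2))) with hv0
    set v3 : ℝ := (w 1 - q 3 * (E * (a / 2 * v0))) / E with hv3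
    set v2 : ℝ := a * (w 0 - b / a * w 1 + c / a * w 2) with hv2
    set vv : Fin 4 → ℝ := ![v0, 0, v2, v3] with hvv
    have hvv0 : vv 0 = v0 := rfl
    have hvv2 : vv 2 = v2 := rfl
    have hvv3 : vv 3 = v3 := rfl
    have hDEv : DE vv = E * (a / 2 * v0) := by
      simp [hDE, hP0, hvv0, smul_eq_mul]
    have hDE'v : DE' vv = w 2 := by
      have : DE' vv = E' * (-(a / 2) * v0) := by
        simp [hDE', hP0, hvv0, smul_eq_mul]
      rw [this, hv0]
      field_simp
    have hD1v : D1 vv = w 1 := by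
      have : D1 vv = q 3 * (E * (a / 2 * v0)) + E * v3 := by
        simp [hD1, hDEv, hP3, hvv3, smul_eq_mul]
      rw [this, hv3]
      field_simp
      ring
    have hD0v : D0 vv = w 0 := by
      have : D0 vv = (1 / a) * v2 + (b / a) * (D1 vv) - (c / a) * (DE' vv) := by
        simp [hD0, hP2, hvv2, smul_eq_mul]
      rw [this, hD1v, hDE'v, hv2]
      field_simp
      ring
    refine ⟨vv, ?_⟩
    funext i
    fin_cases i
    · exact hD0v
    · exact hD1v
    · exact hDE'v
end

section
/- (Symplectic realization, d = 0) Let φ : ℝ⁴ → ℝ³ be given by φ(q1,q2,p1,p2) = (p1/a + (b/a)p2·e^{(a/2)q1} − (c/a)e^{−(a/2)q1}, p2·e^{(a/2)q1}, e^{−(a/2)q1}). If a differentiable curve (q1(t), q2(t), p1(t), p2(t)) satisfies Hamilton's equations q̇1 = (2/a)p1, q̇2 = −(2b²/a)p2·e^{a q1} + 2bc/a, ṗ1 = −c²e^{−a q1} + b²p2²e^{a q1}, ṗ2 = 0, then the curve (x(t), y(t), z(t)) = φ(q1(t), q2(t), p1(t), p2(t)) satisfies the Lotka–Volterra type system ẋ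 = x(by+cz), ẏ = y(ax−by+cz), ż = z(−ax+by−cz). -/
/-- Symplectic realization (`d = 0`): solutions of Hamilton's equations on `ℝ⁴` are
mapped by `φ` to solutions of the Lotka–Volterra type system. -/
theorem hamilton_to_lotka_volterra (a b c : ℝ) (ha : a ≠ 0) (hc : c ≠ 0)
    (q₁ q₂ p₁ p₂ : ℝ → ℝ)
    (hq₁ : ∀ t, HasDerivAt q₁ (2 / a * p₁ t) t)
    (hq₂ : ∀ t, HasDerivAt q₂ (-(2 * b ^ 2 / a) * p₂ t * Real.exp (a * q₁ t)
                                + 2 * b * c / a) t)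
    (hp₁ : ∀ t, HasDerivAt p₁ (-(c ^ 2) * Real.exp (-(a * q₁ t))
                                + b ^ 2 * (p₂ t) ^ 2 * Real.exp (a * q₁ t)) t)
    (hp₂ : ∀ t, HasDerivAt p₂ 0 t)
    (x y z : ℝ → ℝ)
    (hx : ∀ t, x t = 1 / a * p₁ t + b / a * p₂ t * Real.exp (a / 2 * q₁ t)
                      - c / a * Real.exp (-(a / 2) * q₁ t))
    (hy : ∀ t, y t = p₂ t * Real.exp (a / 2 * q₁ t))
    (hz : ∀ t, z t = Real.exp (-(a / 2) * q₁ t)) :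
    (∀ t, HasDerivAt x (x t * (b * y t + c * z t)) t)
    ∧ (∀ t, HasDerivAt y (y t * (a * x t - b * y t + c * z t)) t)
    ∧ (∀ t, HasDerivAt z (z t * (-(a * x t) + b * y t - c * z t)) t) := by
  have hE : ∀ t, HasDerivAt (fun t => Real.exp (a / 2 * q₁ t))
      (p₁ t * Real.exp (a / 2 * q₁ t)) t := by
    intro t
    have h := ((hq₁ t).const_mul (a / 2)).exp
    convert h using 1
    field_simp
  have hEn : ∀ t, HasDerivAt (fun t => Real.exp (-(a / 2) * q₁ t))
      (-(p₁ t) * Real.exp (-(a / 2) * q₁ t)) t := by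
    intro t
    have h := ((hq₁ t).const_mul (-(a / 2))).exp
    convert h using 1
    field_simp
  have hexp1 : ∀ t, Real.exp (a * q₁ t)
      = Real.exp (a / 2 * q₁ t) * Real.exp (a / 2 * q₁ t) := by
    intro t
    rw [← Real.exp_add]
    congr 1
    ring
  have hexp2 : ∀ t, Real.exp (-(a * q₁ t))
      = Real.exp (-(a / 2) * q₁ t) * Real.exp (-(a / 2) * q₁ t) := by
    intro t
    rw [← Real.exp_add]
    congr 1
    ring
  refine ⟨fun t => ?_, fun t => ?_, fun t => ?_⟩
  · have h := (((hp₁ t).const_mul (1 / a)).add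
      (((hp₂ t).mul (hE t)).const_mul (b / a))).sub ((hEn t).const_mul (c / a))
    have h' : HasDerivAt x (1 / a * (-(c ^ 2) * Real.exp (-(a * q₁ t))
        + b ^ 2 * (p₂ t) ^ 2 * Real.exp (a * q₁ t))
        + b / a * (0 * Real.exp (a / 2 * q₁ t)
          + p₂ t * (p₁ t * Real.exp (a / 2 * q₁ t)))
        - c / a * (-(p₁ t) * Real.exp (-(a / 2) * q₁ t))) t :=
      h.congr_of_eventuallyEq (Filter.Eventually.of_forall fun s => by rw [hx]; simp only [Pi.add_apply, Pi.sub_apply, Pi.mul_apply]; ring)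
    convert h' using 1
    rw [hx, hy, hz, hexp1, hexp2]
    field_simp
    ring
  · have h := (hp₂ t).mul (hE t)
    have h' : HasDerivAt y (0 * Real.exp (a / 2 * q₁ t)
        + p₂ t * (p₁ t * Real.exp (a / 2 * q₁ t))) t :=
      h.congr_of_eventuallyEq (Filter.Eventually.of_forall fun s => by rw [hy]; rfl)
    convert h' using 1
    rw [hx, hy, hz]
    field_simp
    ring
  · have h' : HasDerivAt z (-(p₁ t) * Real.exp (-(a / 2) * q₁ t)) t :=
      (hEn t).congr_of_eventuallyEq (Filter.Eventually.of_forall fun s => by rw [hz])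
    convert h' using 1
    rw [hx, hy, hz]
    field_simp
    ring
end

section
/- The canonical Poisson bracket on ℝ⁴ is mapped by φ onto the Poisson structure π1: writing φ = (φ₁, φ₂, φ₃) with φ(q1,q2,p1,p2) = (p1/a + (b/a)p2·e^{(a/2)q1} − (c/a)e^{−(a/2)q1}, p2·e^{(a/2)q1}, e^{−(a/2)q1}), one has at every point of ℝ⁴: {φ₁, φ₂}_ω = −(1/2)φ₂, {φ₁, φ₃}_ω = (1/2)φ₃, and {φ₂, φ₃}_ω = 0. -/
/-- The canonical Poisson bracket on `ℝ⁴` with coordinates `(q₁,q₂,p₁,p₂)`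
(indices `0,1,2,3`):
`{F,G} = F_{q₁}G_{p₁} − F_{p₁}G_{q₁} + F_{q₂}G_{p₂} − F_{p₂}G_{q₂}`. -/
noncomputable def canonicalBracket (F G : (Fin 4 → ℝ) → ℝ) (p : Fin 4 → ℝ) : ℝ :=
  fderiv ℝ F p (Pi.single 0 1) * fderiv ℝ G p (Pi.single 2 1)
    - fderiv ℝ F p (Pi.single 2 1) * fderiv ℝ G p (Pi.single 0 1)
    + fderiv ℝ F p (Pi.single 1 1) * fderiv ℝ G p (Pi.single 3 1)
    - fderiv ℝ F p (Pi.single 3 1) * fderiv ℝ G p (Pi.single 1 1)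

/-- Directional (partial) derivatives along coordinate directions can be computed
as one-variable derivatives. -/
lemma fderiv_single_eq {F : (Fin 4 → ℝ) → ℝ} {p : Fin 4 → ℝ} {i : Fin 4}
    (hF : DifferentiableAt ℝ F p) {D : ℝ}
    (h : HasDerivAt (fun t => F (Function.update p i t)) D (p i)) :
    fderiv ℝ F p (Pi.single i 1) = D := by
  have hu : ∀ t : ℝ, Function.update p i t = p + (t - p i) • (Pi.single i 1 : Fin 4 → ℝ) := by
    intro t; funext j
    by_cases hij : j = i
    · subst hij; simp
    · simp [Function.update_of_ne hij, Pi.single_eq_of_ne hij]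
  have hl : HasDerivAt (fun t : ℝ => p + (t - p i) • (Pi.single i 1 : Fin 4 → ℝ))
      ((Pi.single i 1 : Fin 4 → ℝ)) (p i) := by
    have h1 : HasDerivAt (fun t : ℝ => t - p i) 1 (p i) := (hasDerivAt_id _).sub_const _
    simpa using (h1.smul_const ((Pi.single i 1 : Fin 4 → ℝ))).const_add p
  have hFp : HasFDerivAt F (fderiv ℝ F p) (p + (p i - p i) • (Pi.single i 1 : Fin 4 → ℝ)) := by
    simpa using hF.hasFDerivAt
  have h2 := hFp.comp_hasDerivAt (p i) hl
  have h3 : HasDerivAt (fun t => F (Function.update p i t))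
      (fderiv ℝ F p ((Pi.single i 1 : Fin 4 → ℝ))) (p i) := by
    simpa only [Function.comp_def, ← hu] using h2
  exact h3.unique h

/-- The canonical bracket on `ℝ⁴` is mapped by `φ = (φ₁,φ₂,φ₃)` onto the Poisson
structure `π₁`: `{φ₁,φ₂} = −½φ₂`, `{φ₁,φ₃} = ½φ₃`, `{φ₂,φ₃} = 0`. -/
theorem canonical_bracket_maps_to_pi1 (a b c : ℝ) (ha : a ≠ 0) (hc : c ≠ 0)
    (φ₁ φ₂ φ₃ : (Fin 4 → ℝ) → ℝ)
    (hφ₁ : ∀ q, φ₁ q = q 2 / a + b / a * q 3 * Real.exp (a / 2 * q 0)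
                        - c / a * Real.exp (-(a / 2) * q 0))
    (hφ₂ : ∀ q, φ₂ q = q 3 * Real.exp (a / 2 * q 0))
    (hφ₃ : ∀ q, φ₃ q = Real.exp (-(a / 2) * q 0)) :
    (∀ p, canonicalBracket φ₁ φ₂ p = -(1 / 2) * φ₂ p)
    ∧ (∀ p, canonicalBracket φ₁ φ₃ p = 1 / 2 * φ₃ p)
    ∧ (∀ p, canonicalBracket φ₂ φ₃ p = 0) := by
  have e1 : φ₁ = fun q => q 2 / a + b / a * q 3 * Real.exp (a / 2 * q 0)
                        - c / a * Real.exp (-(a / 2) * q 0) := funext hφ₁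
  have e2 : φ₂ = fun q => q 3 * Real.exp (a / 2 * q 0) := funext hφ₂
  have e3 : φ₃ = fun q => Real.exp (-(a / 2) * q 0) := funext hφ₃
  subst e1 e2 e3
  have d1 : ∀ p, DifferentiableAt ℝ (fun q : Fin 4 → ℝ =>
      q 2 / a + b / a * q 3 * Real.exp (a / 2 * q 0)
        - c / a * Real.exp (-(a / 2) * q 0)) p := by intro p; fun_prop
  have d2 : ∀ p, DifferentiableAt ℝ (fun q : Fin 4 → ℝ => q 3 * Real.exp (a / 2 * q 0)) p := by
    intro p; fun_prop
  have d3 : ∀ p, DifferentiableAt ℝ (fun q : Fin 4 → ℝ => Real.exp (-(a / 2) * q 0)) p := by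
    intro p; fun_prop
  -- one-variable exponential derivatives
  have hexpP : ∀ x : ℝ, HasDerivAt (fun t : ℝ => Real.exp (a / 2 * t))
      (a / 2 * Real.exp (a / 2 * x)) x := fun x => by
    simpa [mul_comm] using ((hasDerivAt_id x).const_mul (a / 2)).exp
  have hexpM : ∀ x : ℝ, HasDerivAt (fun t : ℝ => Real.exp (-(a / 2) * t))
      (-(a / 2) * Real.exp (-(a / 2) * x)) x := fun x => by
    simpa [mul_comm] using ((hasDerivAt_id x).const_mul (-(a / 2))).exp
  -- partial derivatives of φ₁
  have h10 : ∀ p : Fin 4 → ℝ, fderiv ℝ (fun q : Fin 4 → ℝ =>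
      q 2 / a + b / a * q 3 * Real.exp (a / 2 * q 0)
        - c / a * Real.exp (-(a / 2) * q 0)) p (Pi.single 0 1)
      = b / a * p 3 * (a / 2 * Real.exp (a / 2 * p 0))
        - c / a * (-(a / 2) * Real.exp (-(a / 2) * p 0)) := by
    intro p
    apply fderiv_single_eq (d1 p)
    have key := (((hasDerivAt_const (p 0) (p 2 / a)).add
        (((hexpP (p 0)).const_mul (b / a * p 3)))).sub
        ((hexpM (p 0)).const_mul (c / a)))
    simpa [Pi.add_def, Pi.sub_def, Function.update, mul_comm, mul_assoc, mul_left_comm] using key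
  have h12 : ∀ p : Fin 4 → ℝ, fderiv ℝ (fun q : Fin 4 → ℝ =>
      q 2 / a + b / a * q 3 * Real.exp (a / 2 * q 0)
        - c / a * Real.exp (-(a / 2) * q 0)) p (Pi.single 2 1) = 1 / a := by
    intro p
    apply fderiv_single_eq (d1 p)
    have key := (((hasDerivAt_id (p 2)).div_const a).add
        (hasDerivAt_const (p 2) (b / a * p 3 * Real.exp (a / 2 * p 0)))).sub
        (hasDerivAt_const (p 2) (c / a * Real.exp (-(a / 2) * p 0)))
    simpa [Pi.add_def, Pi.sub_def, Function.update, one_div] using key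
  have h11 : ∀ p : Fin 4 → ℝ, fderiv ℝ (fun q : Fin 4 → ℝ =>
      q 2 / a + b / a * q 3 * Real.exp (a / 2 * q 0)
        - c / a * Real.exp (-(a / 2) * q 0)) p (Pi.single 1 1) = 0 := by
    intro p
    apply fderiv_single_eq (d1 p)
    have key := hasDerivAt_const (p 1) (p 2 / a + b / a * p 3 * Real.exp (a / 2 * p 0)
        - c / a * Real.exp (-(a / 2) * p 0))
    simpa [Function.update] using key
  have h13 : ∀ p : Fin 4 → ℝ, fderiv ℝ (fun q : Fin 4 → ℝ =>
      q 2 / a + b / a * q 3 * Real.exp (a / 2 * q 0)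
        - c / a * Real.exp (-(a / 2) * q 0)) p (Pi.single 3 1)
      = b / a * Real.exp (a / 2 * p 0) := by
    intro p
    apply fderiv_single_eq (d1 p)
    have key := (((hasDerivAt_const (p 3) (p 2 / a)).add
        (((hasDerivAt_id (p 3)).const_mul (b / a)).mul_const (Real.exp (a / 2 * p 0)))).sub
        (hasDerivAt_const (p 3) (c / a * Real.exp (-(a / 2) * p 0))))
    simpa [Pi.add_def, Pi.sub_def, Function.update, mul_comm, mul_assoc, mul_left_comm] using key
  -- partial derivatives of φ₂
  have h20 : ∀ p : Fin 4 → ℝ, fderiv ℝ (fun q : Fin 4 → ℝ => q 3 * Real.exp (a / 2 * q 0))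
      p (Pi.single 0 1) = p 3 * (a / 2 * Real.exp (a / 2 * p 0)) := by
    intro p
    apply fderiv_single_eq (d2 p)
    have key := (hexpP (p 0)).const_mul (p 3)
    simpa [Function.update, mul_comm, mul_assoc, mul_left_comm] using key
  have h21 : ∀ p : Fin 4 → ℝ, fderiv ℝ (fun q : Fin 4 → ℝ => q 3 * Real.exp (a / 2 * q 0))
      p (Pi.single 1 1) = 0 := by
    intro p
    apply fderiv_single_eq (d2 p)
    simpa [Function.update] using hasDerivAt_const (p 1) (p 3 * Real.exp (a / 2 * p 0))
  have h22 : ∀ p : Fin 4 → ℝ, fderiv ℝ (fun q : Fin 4 → ℝ => q 3 * Real.exp (a / 2 * q 0))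
      p (Pi.single 2 1) = 0 := by
    intro p
    apply fderiv_single_eq (d2 p)
    simpa [Function.update] using hasDerivAt_const (p 2) (p 3 * Real.exp (a / 2 * p 0))
  have h23 : ∀ p : Fin 4 → ℝ, fderiv ℝ (fun q : Fin 4 → ℝ => q 3 * Real.exp (a / 2 * q 0))
      p (Pi.single 3 1) = Real.exp (a / 2 * p 0) := by
    intro p
    apply fderiv_single_eq (d2 p)
    simpa [Function.update] using (hasDerivAt_id (p 3)).mul_const (Real.exp (a / 2 * p 0))
  -- partial derivatives of φ₃
  have h30 : ∀ p : Fin 4 → ℝ, fderiv ℝ (fun q : Fin 4 → ℝ => Real.exp (-(a / 2) * q 0))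
      p (Pi.single 0 1) = -(a / 2) * Real.exp (-(a / 2) * p 0) := by
    intro p
    apply fderiv_single_eq (d3 p)
    simpa [Function.update] using hexpM (p 0)
  have h31 : ∀ p : Fin 4 → ℝ, fderiv ℝ (fun q : Fin 4 → ℝ => Real.exp (-(a / 2) * q 0))
      p (Pi.single 1 1) = 0 := by
    intro p
    apply fderiv_single_eq (d3 p)
    simpa [Function.update] using hasDerivAt_const (p 1) (Real.exp (-(a / 2) * p 0))
  have h32 : ∀ p : Fin 4 → ℝ, fderiv ℝ (fun q : Fin 4 → ℝ => Real.exp (-(a / 2) * q 0))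
      p (Pi.single 2 1) = 0 := by
    intro p
    apply fderiv_single_eq (d3 p)
    simpa [Function.update] using hasDerivAt_const (p 2) (Real.exp (-(a / 2) * p 0))
  have h33 : ∀ p : Fin 4 → ℝ, fderiv ℝ (fun q : Fin 4 → ℝ => Real.exp (-(a / 2) * q 0))
      p (Pi.single 3 1) = 0 := by
    intro p
    apply fderiv_single_eq (d3 p)
    simpa [Function.update] using hasDerivAt_const (p 3) (Real.exp (-(a / 2) * p 0))
  refine ⟨fun p => ?_, fun p => ?_, fun p => ?_⟩
  · simp only [canonicalBracket, h10 p, h11 p, h12 p, h13 p, h20 p, h21 p, h22 p, h23 p]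
    field_simp
    ring
  · simp only [canonicalBracket, h10 p, h11 p, h12 p, h13 p, h30 p, h31 p, h32 p, h33 p]
    field_simp
    ring
  · simp only [canonicalBracket, h20 p, h21 p, h22 p, h23 p, h30 p, h31 p, h32 p, h33 p]
    ring
end

section
/- (Symmetries of Newton's equations, d = 0: invariance of the solution set) Let a ≠ 0, b ≠ 0, c ≠ 0 and suppose the twice-differentiable curve (q1, q2) : ℝ → ℝ² satisfies Newton's equations q̈1 − (a/(2b²))e^{−a q1} q̇2² + (2c/b)e^{−a q1} q̇2 = 0 and q̈2 − a q̇1 q̇2 + 2bc q̇1 = 0. Then for every s, τ, γ ∈ ℝ, the transformed curve q̃1(t) = q1(e^{−as}(t−τ)) + 2s, q̃2(t) = e^{as} q2(e^{−as}(t−τ)) + γ also satisfies Newton's equations. (This is the one-parameter group generated by the symmetry vector fields v = (αat+β)∂/∂t + 2α ∂/∂q1 + (αa q2 + γ)∂/∂q2.) -/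
/-- The curve `(q₁,q₂)` is a (twice-differentiable) solution of Newton's equations
`q̈₁ − (a/(2b²))e^{−aq₁}q̇₂² + (2c/b)e^{−aq₁}q̇₂ = 0`, `q̈₂ − aq̇₁q̇₂ + 2bcq̇₁ = 0`. -/
def IsNewtonSolutionD0 (a b c : ℝ) (q₁ q₂ : ℝ → ℝ) : Prop :=
  ∃ q₁' q₂' q₁'' q₂'' : ℝ → ℝ,
    (∀ t, HasDerivAt q₁ (q₁' t) t) ∧ (∀ t, HasDerivAt q₂ (q₂' t) t) ∧
    (∀ t, HasDerivAt q₁' (q₁'' t) t) ∧ (∀ t, HasDerivAt q₂' (q₂'' t) t) ∧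
    (∀ t, q₁'' t - a / (2 * b ^ 2) * Real.exp (-a * q₁ t) * (q₂' t) ^ 2
            + 2 * c / b * Real.exp (-a * q₁ t) * q₂' t = 0) ∧
    (∀ t, q₂'' t - a * q₁' t * q₂' t + 2 * b * c * q₁' t = 0)

/-- Symmetries of Newton's equations (`d = 0`): the solution set is invariant under
the one-parameter transformation group
`q̃₁(t) = q₁(e^{−as}(t−τ)) + 2s`, `q̃₂(t) = e^{as}q₂(e^{−as}(t−τ)) + γ`
generated by the symmetry vector fields
`v = (αat+β)∂/∂t + 2α∂/∂q₁ + (αaq₂+γ)∂/∂q₂`. -/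
theorem newton_symmetry_d0 (a b c : ℝ) (ha : a ≠ 0) (hb : b ≠ 0) (hc : c ≠ 0)
    (q₁ q₂ : ℝ → ℝ) (h : IsNewtonSolutionD0 a b c q₁ q₂) :
    ∀ s τ γ : ℝ, IsNewtonSolutionD0 a b c
      (fun t => q₁ (Real.exp (-(a * s)) * (t - τ)) + 2 * s)
      (fun t => Real.exp (a * s) * q₂ (Real.exp (-(a * s)) * (t - τ)) + γ) := by
  intro s τ γ
  obtain ⟨q₁', q₂', q₁'', q₂'', hq₁, hq₂, hq₁', hq₂', he₁, he₂⟩ := h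
  set e : ℝ := Real.exp (-(a * s)) with he
  set φ : ℝ → ℝ := fun t => e * (t - τ) with hφ
  have hφd : ∀ t : ℝ, HasDerivAt φ e t := by
    intro t
    simpa using ((hasDerivAt_id t).sub_const τ).const_mul e
  have hee : Real.exp (a * s) * e = 1 := by
    rw [he, ← Real.exp_add]; simp
  refine ⟨fun t => e * q₁' (φ t), fun t => q₂' (φ t),
    fun t => e * e * q₁'' (φ t), fun t => e * q₂'' (φ t), ?_, ?_, ?_, ?_, ?_, ?_⟩
  · intro t
    have H := ((hq₁ (φ t)).comp t (hφd t)).add_const (2 * s)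
    exact H.congr_deriv (by ring)
  · intro t
    have := (((hq₂ (φ t)).comp t (hφd t)).const_mul (Real.exp (a * s))).add_const γ
    have h2 : Real.exp (a * s) * (q₂' (φ t) * e) = q₂' (φ t) := by
      rw [mul_comm (q₂' (φ t)) e, ← mul_assoc, hee, one_mul]
    simpa [h2] using this
  · intro t
    have H := ((hq₁' (φ t)).comp t (hφd t)).const_mul e
    exact H.congr_deriv (by ring)
  · intro t
    have H := (hq₂' (φ t)).comp t (hφd t)
    exact H.congr_deriv (by ring)
  · intro t
    have h1 := he₁ (φ t)
    have hexp : Real.exp (-a * (q₁ (φ t) + 2 * s)) = Real.exp (-a * q₁ (φ t)) * (e * e) := by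
      rw [he, ← Real.exp_add, ← Real.exp_add]; ring_nf
    rw [hexp]
    have : e * e * q₁'' (φ t)
        - a / (2 * b ^ 2) * (Real.exp (-a * q₁ (φ t)) * (e * e)) * q₂' (φ t) ^ 2
        + 2 * c / b * (Real.exp (-a * q₁ (φ t)) * (e * e)) * q₂' (φ t)
        = e * e * (q₁'' (φ t) - a / (2 * b ^ 2) * Real.exp (-a * q₁ (φ t)) * q₂' (φ t) ^ 2
            + 2 * c / b * Real.exp (-a * q₁ (φ t)) * q₂' (φ t)) := by ring
    rw [this, h1, mul_zero]
  · intro t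
    have h2 := he₂ (φ t)
    have : e * q₂'' (φ t) - a * (e * q₁' (φ t)) * q₂' (φ t) + 2 * b * c * (e * q₁' (φ t))
        = e * (q₂'' (φ t) - a * q₁' (φ t) * q₂' (φ t) + 2 * b * c * q₁' (φ t)) := by ring
    rw [this, h2, mul_zero]
end

section
/- (Hamilton–Poisson realization for d ≠ 0) For all (x,y,z) ∈ ℝ³, the matrix–vector product π(x,y,z) · ∇H(x,y,z) equals the vector field of the system (1.1): (x(by+cz), y(ax−by+cz+d), z(−ax+by−cz−d)), where H(x,y,z) = d·y·z and ∇H(x,y,z) = (0, dz, dy). -/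
/-- Hamilton–Poisson realization for `d ≠ 0`: `π(x,y,z) · ∇H(x,y,z)` with `H = dyz`
equals the vector field of system (1.1). -/
theorem pi_gradH_eq_vector_field_d (a b c d : ℝ)
    (ha : a ≠ 0) (hb : b ≠ 0) (hc : c ≠ 0) (hd : d ≠ 0) (x y z : ℝ) :
    (!![0, c / (a * d) * (a * x - 2 * b * y), b / (a * d) * (a * x + 2 * c * z);
        -(c / (a * d) * (a * x - 2 * b * y)), 0, 1 / d * (a * x - b * y + c * z + d);
        -(b / (a * d) * (a * x + 2 * c * z)), -(1 / d * (a * x - b * y + c * z + d)), 0]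
      : Matrix (Fin 3) (Fin 3) ℝ).mulVec ![0, d * z, d * y]
    = ![x * (b * y + c * z),
        y * (a * x - b * y + c * z + d),
        z * (-(a * x) + b * y - c * z - d)] := by
  funext i
  fin_cases i <;>
    simp [Matrix.mulVec, dotProduct, Fin.sum_univ_succ] <;>
    field_simp <;> ring
end

section
/- (Casimir for d ≠ 0) The function C(x,y,z) = x(ax−2by+2cz+2d) − (4bc/a)yz is a Casimir of the Poisson structure π: for all (x,y,z) ∈ ℝ³, π(x,y,z) · ∇C(x,y,z) = 0, where ∇C(x,y,z) = (2ax−2by+2cz+2d, −2bx−(4bc/a)z, 2cx−(4bc/a)y). -/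
/-- Casimir for `d ≠ 0`: `C(x,y,z) = x(ax−2by+2cz+2d) − (4bc/a)yz` satisfies
`π(x,y,z) · ∇C(x,y,z) = 0`. -/
theorem C_Casimir_d (a b c d : ℝ)
    (ha : a ≠ 0) (hb : b ≠ 0) (hc : c ≠ 0) (hd : d ≠ 0) (x y z : ℝ) :
    (!![0, c / (a * d) * (a * x - 2 * b * y), b / (a * d) * (a * x + 2 * c * z);
        -(c / (a * d) * (a * x - 2 * b * y)), 0, 1 / d * (a * x - b * y + c * z + d);
        -(b / (a * d) * (a * x + 2 * c * z)), -(1 / d * (a * x - b * y + c * z + d)), 0]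
      : Matrix (Fin 3) (Fin 3) ℝ).mulVec
      ![2 * a * x - 2 * b * y + 2 * c * z + 2 * d,
        -(2 * b * x) - 4 * b * c / a * z,
        2 * c * x - 4 * b * c / a * y] = 0 := by
  funext i
  fin_cases i <;>
  · simp [Matrix.mulVec, dotProduct, Fin.sum_univ_three]
    field_simp
    ring
end

section
/- (Symplectic realization, d ≠ 0) Define φ : ℝ⁴ → ℝ³ by φ(q1,q2,p1,p2) = (x,y,z) with x = p1/a + (1/(2ad))(a p2 − p1² + 4b²c²q1²) − d/a, y = c q1 + (1/(4bd))(a p2 − p1² + 4b²c²q1²), z = b q1 − (1/(4cd))(a p2 − p1² + 4b²c²q1²). If a differentiable curve (q1(t),q2(t),p1(t),p2(t)) satisfies Hamilton's equations q̇1 = (1/(4bcd))p1(a p2 − p1² + 4b²c²q1²), q̇2 = −(a/(8bcd))(a p2 − p1² + 4b²c²q1²), ṗ1 = −2bcd q1 + (bc/d)(a p2 − p1² + 4b²c²q1²)q1, ṗ2 = 0, then (x(t),y(t),z(t)) = φ(q1(t),q2(t),p1(t),p2(t)) satisfies the system ẋ = x(by+cz), ẏ = y(ax−by+cz+d), ż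 = z(−ax+by−cz−d). -/
set_option maxHeartbeats 2000000


/-- Symplectic realization (`d ≠ 0`): solutions of Hamilton's equations on `ℝ⁴` are
mapped by `φ` to solutions of system (1.1). -/
theorem hamilton_to_system_d (a b c d : ℝ)
    (ha : a ≠ 0) (hb : b ≠ 0) (hc : c ≠ 0) (hd : d ≠ 0)
    (q₁ q₂ p₁ p₂ : ℝ → ℝ)
    (hq₁ : ∀ t, HasDerivAt q₁
      (1 / (4 * b * c * d) * p₁ t
        * (a * p₂ t - (p₁ t) ^ 2 + 4 * b ^ 2 * c ^ 2 * (q₁ t) ^ 2)) t)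
    (hq₂ : ∀ t, HasDerivAt q₂
      (-(a / (8 * b * c * d))
        * (a * p₂ t - (p₁ t) ^ 2 + 4 * b ^ 2 * c ^ 2 * (q₁ t) ^ 2)) t)
    (hp₁ : ∀ t, HasDerivAt p₁
      (-(2 * b * c * d * q₁ t)
        + b * c / d * (a * p₂ t - (p₁ t) ^ 2 + 4 * b ^ 2 * c ^ 2 * (q₁ t) ^ 2) * q₁ t) t)
    (hp₂ : ∀ t, HasDerivAt p₂ 0 t)
    (x y z : ℝ → ℝ)
    (hx : ∀ t, x t = p₁ t / a
      + 1 / (2 * a * d) * (a * p₂ t - (p₁ t) ^ 2 + 4 * b ^ 2 * c ^ 2 * (q₁ t) ^ 2)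
      - d / a)
    (hy : ∀ t, y t = c * q₁ t
      + 1 / (4 * b * d) * (a * p₂ t - (p₁ t) ^ 2 + 4 * b ^ 2 * c ^ 2 * (q₁ t) ^ 2))
    (hz : ∀ t, z t = b * q₁ t
      - 1 / (4 * c * d) * (a * p₂ t - (p₁ t) ^ 2 + 4 * b ^ 2 * c ^ 2 * (q₁ t) ^ 2)) :
    (∀ t, HasDerivAt x (x t * (b * y t + c * z t)) t)
    ∧ (∀ t, HasDerivAt y (y t * (a * x t - b * y t + c * z t + d)) t)
    ∧ (∀ t, HasDerivAt z (z t * (-(a * x t) + b * y t - c * z t - d)) t) := by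
  have hF : ∀ t, HasDerivAt
      (fun t => a * p₂ t - (p₁ t) ^ 2 + 4 * b ^ 2 * c ^ 2 * (q₁ t) ^ 2)
      (4 * b * c * d * (p₁ t * q₁ t)) t := by
    intro t
    have h := (((hp₂ t).const_mul a).sub ((hp₁ t).pow 2)).add
      (((hq₁ t).pow 2).const_mul (4 * b ^ 2 * c ^ 2))
    refine HasDerivAt.congr_deriv h ?_
    field_simp
    ring
  refine ⟨?_, ?_, ?_⟩ <;> intro t
  · have hxf : x = fun t => p₁ t / a
        + 1 / (2 * a * d) * (a * p₂ t - (p₁ t) ^ 2 + 4 * b ^ 2 * c ^ 2 * (q₁ t) ^ 2)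
        - d / a := funext hx
    have h := (((hp₁ t).div_const a).add ((hF t).const_mul (1 / (2 * a * d)))).sub_const (d / a)
    rw [show x t * (b * y t + c * z t) =
        (-(2 * b * c * d * q₁ t) + b * c / d
          * (a * p₂ t - (p₁ t) ^ 2 + 4 * b ^ 2 * c ^ 2 * (q₁ t) ^ 2) * q₁ t) / a
        + 1 / (2 * a * d) * (4 * b * c * d * (p₁ t * q₁ t)) from by
      rw [hx, hy, hz]; field_simp; ring]
    rw [hxf]
    exact h
  · have hyf : y = fun t => c * q₁ t
        + 1 / (4 * b * d) * (a * p₂ t - (p₁ t) ^ 2 + 4 * b ^ 2 * c ^ 2 * (q₁ t) ^ 2) :=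
      funext hy
    have h := ((hq₁ t).const_mul c).add ((hF t).const_mul (1 / (4 * b * d)))
    rw [show y t * (a * x t - b * y t + c * z t + d) =
        c * (1 / (4 * b * c * d) * p₁ t
          * (a * p₂ t - (p₁ t) ^ 2 + 4 * b ^ 2 * c ^ 2 * (q₁ t) ^ 2))
        + 1 / (4 * b * d) * (4 * b * c * d * (p₁ t * q₁ t)) from by
      rw [hx, hy, hz]; field_simp; ring]
    rw [hyf]
    exact h
  · have hzf : z = fun t => b * q₁ t
        - 1 / (4 * c * d) * (a * p₂ t - (p₁ t) ^ 2 + 4 * b ^ 2 * c ^ 2 * (q₁ t) ^ 2) :=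
      funext hz
    have h := ((hq₁ t).const_mul b).sub ((hF t).const_mul (1 / (4 * c * d)))
    rw [show z t * (-(a * x t) + b * y t - c * z t - d) =
        b * (1 / (4 * b * c * d) * p₁ t
          * (a * p₂ t - (p₁ t) ^ 2 + 4 * b ^ 2 * c ^ 2 * (q₁ t) ^ 2))
        - 1 / (4 * c * d) * (4 * b * c * d * (p₁ t * q₁ t)) from by
      rw [hx, hy, hz]; field_simp; ring]
    rw [hzf]
    exact h
end
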